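/- arXiv:2602.04207 — 2 statements merged into one kernel-verified Lean document; each statement's English description precedes it below -/
import Mathlib

section
/- With L : L²(D) → L²(0,K) as above, the multi-frequency far-field operator F : L²(0,K) → L²(0,K) admits the symmetric factorization F = L T L*, where T : L²(D) → L²(D) is the multiplication operator (Tu)(y) = (2π)^{-1/2} S(y) e^{-iκ(c⁻¹ x̂·y - t₀)} u(y), with S ∈ L^∞(D) real-valued. -/
open scoped RealInnerProductSpace
open MeasureTheory

/-- Symmetric factorization `F = L T L*` of the multi-frequency
far-field operator: for every `φ ∈ L²(0,K)` and every `τ`,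
`∫₀^K u^∞(xh, κ+τ-s) φ(s) ds`
`  = ∫_D e^{-iτ f(y)} · (2π)^{-1/2} S(y) e^{-iκ f(y)} · (∫₀^K e^{i s f(y)} φ(s) ds) dy`,
where `f(y) = c⁻¹ xh·y - t₀`; i.e. `F φ = (L ∘ T ∘ L*) φ` with `T` the
multiplication operator by `(2π)^{-1/2} S(y) e^{-iκ f(y)}` and `L*` the adjoint
of the data-to-pattern operator `L`. -/
theorem farfield_factorization
    (D : Set (EuclideanSpace ℝ (Fin 3))) (hmeas : MeasurableSet D)
    (hb : Bornology.IsBounded D)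
    (S : EuclideanSpace ℝ (Fin 3) → ℝ) (hSint : IntegrableOn S D)
    (CS : ℝ) (hSbd : ∀ y ∈ D, |S y| ≤ CS)
    (xh : EuclideanSpace ℝ (Fin 3)) (hx : ‖xh‖ = 1)
    (c t₀ κ K : ℝ) (hc : 0 < c) (hK : 0 < K)
    (f : EuclideanSpace ℝ (Fin 3) → ℝ) (hf : ∀ y, f y = c⁻¹ * ⟪xh, y⟫ - t₀)
    (uinf : ℝ → ℂ)
    (huinf : ∀ ω : ℝ, uinf ω = (Real.sqrt (2 * Real.pi))⁻¹ *
      ∫ y in D, Complex.exp (-Complex.I * ω * (f y)) * (S y : ℂ))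
    (φ : ℝ → ℂ) (hφ : IntegrableOn φ (Set.Ioo (0:ℝ) K)) :
    ∀ τ : ℝ,
      (∫ s in Set.Ioo (0:ℝ) K, uinf (κ + τ - s) * φ s) =
        ∫ y in D, Complex.exp (-Complex.I * τ * (f y)) *
          (((Real.sqrt (2 * Real.pi))⁻¹ : ℝ) * (S y : ℂ) *
            Complex.exp (-Complex.I * κ * (f y)) *
          (∫ s in Set.Ioo (0:ℝ) K, Complex.exp (Complex.I * s * (f y)) * φ s)) := by
  intro τ
  set C : ℂ := (((Real.sqrt (2 * Real.pi))⁻¹ : ℝ) : ℂ) with hC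
  have hfc : Continuous f := by
    have : f = fun y => c⁻¹ * ⟪xh, y⟫ - t₀ := funext hf
    rw [this]
    exact ((continuous_const.mul (continuous_const.inner continuous_id)).sub continuous_const)
  set μ := volume.restrict (Set.Ioo (0:ℝ) K)
  set ν := volume.restrict D
  set F : ℝ × (EuclideanSpace ℝ (Fin 3)) → ℂ := fun z =>
    Complex.exp (-Complex.I * (κ + τ - z.1) * (f z.2)) * (S z.2 : ℂ) * φ z.1 with hF
  have hFmeas : AEStronglyMeasurable F (μ.prod ν) := by
    apply AEStronglyMeasurable.mul
    · apply AEStronglyMeasurable.mul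
      · apply Continuous.aestronglyMeasurable
        have h1 : Continuous fun z : ℝ × (EuclideanSpace ℝ (Fin 3)) =>
            ((κ : ℂ) + (τ : ℂ) - (z.1 : ℂ)) :=
          continuous_const.sub (Complex.continuous_ofReal.comp continuous_fst)
        have h2 : Continuous fun z : ℝ × (EuclideanSpace ℝ (Fin 3)) =>
            ((f z.2 : ℝ) : ℂ) := Complex.continuous_ofReal.comp (hfc.comp continuous_snd)
        exact Complex.continuous_exp.comp ((continuous_const.mul h1).mul h2)
      · exact (Complex.continuous_ofReal.comp_aestronglyMeasurable hSint.1).comp_snd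
    · exact hφ.1.comp_fst
  have hFint : Integrable F (μ.prod ν) := by
    have hbound : Integrable (fun z : ℝ × (EuclideanSpace ℝ (Fin 3)) => ‖φ z.1‖ * ‖S z.2‖)
        (μ.prod ν) := hφ.norm.mul_prod hSint.norm
    refine hbound.mono' hFmeas ?_
    filter_upwards with z
    apply le_of_eq
    have h1 : ‖Complex.exp (-Complex.I * (κ + τ - z.1) * (f z.2))‖ = 1 := by
      rw [Complex.norm_exp]
      have : (-Complex.I * (κ + τ - z.1) * (f z.2)).re = 0 := by simp
      rw [this, Real.exp_zero]
    calc ‖F z‖ = ‖Complex.exp (-Complex.I * (κ + τ - z.1) * (f z.2))‖ * ‖(S z.2 : ℂ)‖ * ‖φ z.1‖ := by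
          simp [hF, norm_mul]
      _ = ‖S z.2‖ * ‖φ z.1‖ := by rw [h1]; simp
      _ = ‖φ z.1‖ * ‖S z.2‖ := mul_comm _ _
  have swap : (∫ s, ∫ y, F (s, y) ∂ν ∂μ) = ∫ y, ∫ s, F (s, y) ∂μ ∂ν :=
    integral_integral_swap hFint
  calc (∫ s in Set.Ioo (0:ℝ) K, uinf (κ + τ - s) * φ s)
      = ∫ s, C * ∫ y, F (s, y) ∂ν ∂μ := by
        refine integral_congr_ae (Filter.Eventually.of_forall fun s => ?_)
        simp only [huinf]
        push_cast
        rw [mul_assoc, ← integral_mul_const]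
    _ = C * ∫ s, ∫ y, F (s, y) ∂ν ∂μ := integral_const_mul _ _
    _ = C * ∫ y, ∫ s, F (s, y) ∂μ ∂ν := by rw [swap]
    _ = ∫ y, C * ∫ s, F (s, y) ∂μ ∂ν := (integral_const_mul _ _).symm
    _ = ∫ y in D, Complex.exp (-Complex.I * τ * (f y)) *
          (C * (S y : ℂ) * Complex.exp (-Complex.I * κ * (f y)) *
          (∫ s in Set.Ioo (0:ℝ) K, Complex.exp (Complex.I * s * (f y)) * φ s)) := by
        refine integral_congr_ae (Filter.Eventually.of_forall fun y => ?_)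
        have key : ∀ s : ℝ, F (s, y) =
            (Complex.exp (-Complex.I * τ * (f y)) * ((S y : ℂ) *
              Complex.exp (-Complex.I * κ * (f y)))) *
            (Complex.exp (Complex.I * s * (f y)) * φ s) := by
          intro s
          simp only [hF]
          rw [show (-Complex.I * ((κ:ℂ) + (τ:ℂ) - (s:ℂ)) * ((f y : ℝ):ℂ)) =
              (-Complex.I * (τ:ℂ) * ((f y : ℝ):ℂ)) + ((-Complex.I * (κ:ℂ) * ((f y : ℝ):ℂ)) +
                (Complex.I * (s:ℂ) * ((f y : ℝ):ℂ))) by ring,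
            Complex.exp_add, Complex.exp_add]
          ring
        simp only [key]
        rw [integral_const_mul]
        ring
end

section
/- Let A : X → Y be a compact linear operator between Hilbert spaces with singular system (μ_n, φ_n, g_n). The equation Aφ = f is solvable if and only if f ∈ N(A*)^⊥ and Σ_{n=1}^∞ μ_n^{-2} |⟨f, g_n⟩|² < ∞; in this case φ = Σ_n μ_n^{-1} ⟨f, g_n⟩ φ_n is a solution. -/
open scoped ComplexInnerProductSpace

lemma picard_aux
    {X Y : Type*}
    [NormedAddCommGroup X] [InnerProductSpace ℂ X] [CompleteSpace X]
    [NormedAddCommGroup Y] [InnerProductSpace ℂ Y] [CompleteSpace Y]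
    (A : X →L[ℂ] Y)
    (μ : ℕ → ℝ) (φ : ℕ → X) (g : ℕ → Y)
    (hμ : ∀ n, 0 < μ n)
    (hφ : Orthonormal ℂ φ) (hg : Orthonormal ℂ g)
    (hAφ : ∀ n, A (φ n) = (μ n : ℂ) • g n)
    (hspan : (Submodule.span ℂ (Set.range g)).topologicalClosure =
      (LinearMap.ker (ContinuousLinearMap.adjoint A : Y →ₗ[ℂ] X))ᗮ)
    (f : Y)
    (hperp : ∀ h ∈ LinearMap.ker (ContinuousLinearMap.adjoint A : Y →ₗ[ℂ] X), ⟪h, f⟫ = 0)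
    (hsum : Summable (fun n => (1 / (μ n) ^ 2) * ‖⟪g n, f⟫‖ ^ 2)) :
    A (∑' n, (((μ n : ℂ))⁻¹ * ⟪g n, f⟫) • φ n) = f := by
  set c : ℕ → ℂ := fun n => ((μ n : ℂ))⁻¹ * ⟪g n, f⟫ with hc
  -- summability of the series defining the candidate solution
  have hnormsq : ∀ n, ‖c n‖ ^ 2 = (1 / (μ n) ^ 2) * ‖⟪g n, f⟫‖ ^ 2 := by
    intro n
    have : ‖((μ n : ℂ))⁻¹‖ = (μ n)⁻¹ := by
      rw [norm_inv, Complex.norm_real, Real.norm_eq_abs, abs_of_pos (hμ n)]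
    rw [hc]
    simp only [norm_mul, this, mul_pow]
    ring
  have hsumc : Summable fun n => ‖c n‖ ^ 2 := by
    simpa only [hnormsq] using hsum
  have hSsum : Summable fun n => c n • φ n := by
    have := (hφ.orthogonalFamily.summable_iff_norm_sq_summable c).2 hsumc
    simpa [LinearIsometry.toSpanSingleton_apply] using this
  -- push A through the sum
  have hA : A (∑' n, c n • φ n) = ∑' n, ⟪g n, f⟫ • g n := by
    rw [A.map_tsum hSsum]
    congr 1
    funext n
    rw [map_smul, hAφ n, smul_smul, hc]
    simp only
    rw [mul_comm _ ((μ n : ℂ)), ← mul_assoc,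
      mul_inv_cancel₀ (by exact_mod_cast (hμ n).ne' : (μ n : ℂ) ≠ 0), one_mul]
  rw [hA]
  -- the series `∑ ⟪g n, f⟫ • g n` is summable
  have hg2 : Summable fun n => ⟪g n, f⟫ • g n := by
    have := (hg.orthogonalFamily.summable_iff_norm_sq_summable (fun n => ⟪g n, f⟫)).2
      (hg.inner_products_summable f)
    simpa [LinearIsometry.toSpanSingleton_apply] using this
  set S := (Submodule.span ℂ (Set.range g)).topologicalClosure with hS
  have hfS : f ∈ S := by
    rw [hspan]
    exact (Submodule.mem_orthogonal _ f).2 hperp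
  have htsumS : (∑' n, ⟪g n, f⟫ • g n) ∈ S := by
    refine (Submodule.span ℂ (Set.range g)).isClosed_topologicalClosure.mem_of_tendsto hg2.hasSum
      (Filter.Eventually.of_forall fun s => ?_)
    exact Submodule.sum_mem _ fun n _ => Submodule.smul_mem _ _
      (Submodule.le_topologicalClosure _ (Submodule.subset_span ⟨n, rfl⟩))
  set d := f - ∑' n, ⟪g n, f⟫ • g n with hd
  have hdS : d ∈ S := Submodule.sub_mem _ hfS htsumS
  have hinner : ∀ m, ⟪g m, d⟫ = 0 := by
    intro m
    have h1 : ⟪g m, (∑' n, ⟪g n, f⟫ • g n)⟫ = ∑' n, ⟪g n, f⟫ * ⟪g m, g n⟫ := by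
      have := (innerSL ℂ (g m)).map_tsum hg2
      simpa [inner_smul_right] using this
    have h2 : (∑' n, ⟪g n, f⟫ * ⟪g m, g n⟫) = ⟪g m, f⟫ := by
      rw [tsum_eq_single m]
      · simp [hg.1 m, inner_self_eq_norm_sq_to_K]
      · intro n hn
        simp [hg.2 (Ne.symm hn)]
    rw [hd, inner_sub_right, h1, h2, sub_self]
  have hdperp : d ∈ (Submodule.span ℂ (Set.range g))ᗮ := by
    rw [Submodule.mem_orthogonal']
    intro u hu
    induction hu using Submodule.span_induction with
    | mem x hx => obtain ⟨n, rfl⟩ := hx; rw [← inner_conj_symm, hinner n, map_zero]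
    | zero => simp
    | add x y _ _ hx hy => rw [inner_add_right, hx, hy, add_zero]
    | smul a x _ hx => rw [inner_smul_right, hx, mul_zero]
  have hdS' : d ∈ (Submodule.span ℂ (Set.range g))ᗮᗮ := by
    rw [Submodule.orthogonal_orthogonal_eq_closure]
    exact hdS
  have : d = 0 := by
    have := (Submodule.span ℂ (Set.range g))ᗮ.inf_orthogonal_eq_bot
    have hmem : d ∈ (Submodule.span ℂ (Set.range g))ᗮ ⊓
        (Submodule.span ℂ (Set.range g))ᗮᗮ := ⟨hdperp, hdS'⟩
    rw [this] at hmem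
    simpa using hmem
  have := sub_eq_zero.mp (hd ▸ this)
  exact this.symm

/-- Picard's theorem: Let `A : X → Y` be a compact linear
operator between Hilbert spaces with singular system `(μ_n, φ_n, g_n)`
(complete in the sense that `{g_n}` spans `N(A*)ᗮ`). The equation `Aφ = f` is
solvable iff `f ∈ N(A*)ᗮ` and `Σ μ_n⁻² |(f, g_n)|² < ∞`; in this case
`φ = Σ μ_n⁻¹ (f, g_n) φ_n` is a solution. -/
theorem picard_theorem
    {X Y : Type*}
    [NormedAddCommGroup X] [InnerProductSpace ℂ X] [CompleteSpace X]
    [NormedAddCommGroup Y] [InnerProductSpace ℂ Y] [CompleteSpace Y]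
    (A : X →L[ℂ] Y) (hAcomp : IsCompactOperator A)
    (μ : ℕ → ℝ) (φ : ℕ → X) (g : ℕ → Y)
    (hμ : ∀ n, 0 < μ n)
    (hφ : Orthonormal ℂ φ) (hg : Orthonormal ℂ g)
    (hAφ : ∀ n, A (φ n) = (μ n : ℂ) • g n)
    (hAg : ∀ n, ContinuousLinearMap.adjoint A (g n) = (μ n : ℂ) • φ n)
    (hspan : (Submodule.span ℂ (Set.range g)).topologicalClosure =
      (LinearMap.ker (ContinuousLinearMap.adjoint A : Y →ₗ[ℂ] X))ᗮ)
    (f : Y) :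
    ((∃ u : X, A u = f) ↔
      ((∀ h ∈ LinearMap.ker (ContinuousLinearMap.adjoint A : Y →ₗ[ℂ] X), ⟪h, f⟫ = 0) ∧
        Summable (fun n => (1 / (μ n) ^ 2) * ‖⟪g n, f⟫‖ ^ 2))) ∧
    ((∀ h ∈ LinearMap.ker (ContinuousLinearMap.adjoint A : Y →ₗ[ℂ] X), ⟪h, f⟫ = 0) →
      Summable (fun n => (1 / (μ n) ^ 2) * ‖⟪g n, f⟫‖ ^ 2) →
      A (∑' n, (((μ n : ℂ))⁻¹ * ⟪g n, f⟫) • φ n) = f) := by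
  constructor
  · constructor
    · rintro ⟨u, rfl⟩
      constructor
      · intro h hh
        have hh0 : ContinuousLinearMap.adjoint A h = 0 := LinearMap.mem_ker.mp hh
        rw [← ContinuousLinearMap.adjoint_inner_left, hh0, inner_zero_left]
      · have key : ∀ n, (1 / (μ n) ^ 2) * ‖⟪g n, A u⟫‖ ^ 2 = ‖⟪φ n, u⟫‖ ^ 2 := by
          intro n
          have : ⟪g n, A u⟫ = (μ n : ℂ) * ⟪φ n, u⟫ := by
            rw [← ContinuousLinearMap.adjoint_inner_left, hAg n, inner_smul_left,
              Complex.conj_ofReal]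
          rw [this, norm_mul, Complex.norm_real, Real.norm_eq_abs, abs_of_pos (hμ n), mul_pow]
          rw [one_div, inv_mul_eq_div]
          exact mul_div_cancel_left₀ _ (pow_ne_zero 2 (hμ n).ne')
        rw [funext key]
        exact hφ.inner_products_summable u
    · rintro ⟨hperp, hsum⟩
      exact ⟨_, picard_aux A μ φ g hμ hφ hg hAφ hspan f hperp hsum⟩
  · exact picard_aux A μ φ g hμ hφ hg hAφ hspan f
end
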